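/- Let g be an n×n matrix over a field of characteristic zero (e.g. ℂ). Then det(g) = Σ over all tuples (ℓ₁,…,ℓₙ) of nonnegative integers with Σ_{k=1}^{n} k·ℓ_k = n of ∏_{s=1}^{n} (1/ℓ_s!) · ((-1)^{s+1}/s)^{ℓ_s} · (tr(g^s))^{ℓ_s}. -/

import Mathlib

open Matrix Finset

private def embM {n : ℕ} (Q : Matrix (Fin n) (Fin n) ℂ) : Matrix (Fin (n+1)) (Fin (n+1)) ℂ :=
  Matrix.of (Fin.cons (Fin.cons 1 0) (fun i => Fin.cons 0 (Q i)))

@[simp] private lemma embM_zero_zero {n : ℕ} (Q : Matrix (Fin n) (Fin n) ℂ) : embM Q 0 0 = 1 := rfl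
@[simp] private lemma embM_zero_succ {n : ℕ} (Q : Matrix (Fin n) (Fin n) ℂ) (k : Fin n) :
    embM Q 0 k.succ = 0 := by simp [embM]
@[simp] private lemma embM_succ_zero {n : ℕ} (Q : Matrix (Fin n) (Fin n) ℂ) (i : Fin n) :
    embM Q i.succ 0 = 0 := by simp [embM]
@[simp] private lemma embM_succ_succ {n : ℕ} (Q : Matrix (Fin n) (Fin n) ℂ) (i k : Fin n) :
    embM Q i.succ k.succ = Q i k := by simp [embM]

private lemma embM_mul {n : ℕ} (Q R : Matrix (Fin n) (Fin n) ℂ) :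
    embM Q * embM R = embM (Q * R) := by
  ext i k
  refine Fin.cases ?_ ?_ i <;> [skip; intro i'] <;> refine Fin.cases ?_ ?_ k <;>
    simp [Matrix.mul_apply, Fin.sum_univ_succ]

private lemma embM_one {n : ℕ} : embM (1 : Matrix (Fin n) (Fin n) ℂ) = 1 := by
  ext i k
  refine Fin.cases ?_ ?_ i <;> [skip; intro i'] <;> refine Fin.cases ?_ ?_ k <;>
    intros <;> simp [Matrix.one_apply, Fin.succ_ne_zero, (Fin.succ_ne_zero _).symm,
      Fin.succ_inj]

private theorem tri : ∀ (n : ℕ) (g : Matrix (Fin n) (Fin n) ℂ),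
    ∃ P : Matrix (Fin n) (Fin n) ℂ, IsUnit P.det ∧
      ∀ i j : Fin n, j < i → (P⁻¹ * g * P) i j = 0 := by
  intro n
  induction n with
  | zero => exact fun g => ⟨1, by simp, fun i => i.elim0⟩
  | succ n ih =>
    intro g
    obtain ⟨μ, hμ⟩ := Module.End.exists_eigenvalue (Matrix.mulVecLin g)
    obtain ⟨v, hv⟩ := hμ.exists_hasEigenvector
    have hgv : g *ᵥ v = μ • v := by
      have := hv.apply_eq_smul; rwa [Matrix.mulVecLin_apply] at this
    obtain ⟨j, hj⟩ : ∃ j, v j ≠ 0 := by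
      by_contra h; push_neg at h; exact hv.right (funext h)
    set M₀ : Matrix (Fin (n+1)) (Fin (n+1)) ℂ := Matrix.updateCol 1 j v with hM₀
    set P₀ : Matrix (Fin (n+1)) (Fin (n+1)) ℂ := M₀.submatrix id (Equiv.swap 0 j) with hP₀
    have hdetM₀ : M₀.det = v j := by
      rw [hM₀, ← Matrix.cramer_apply, Matrix.cramer_one]; rfl
    have hdetP₀ : IsUnit P₀.det := by
      have h1 : P₀.det = P₀ᵀ.det := (Matrix.det_transpose _).symm
      rw [h1, hP₀, Matrix.transpose_submatrix, Matrix.det_permute, Matrix.det_transpose, hdetM₀]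
      refine IsUnit.mul ?_ (isUnit_iff_ne_zero.mpr hj)
      rcases Int.units_eq_one_or (Equiv.Perm.sign (Equiv.swap (0 : Fin (n+1)) j)) with h | h <;>
        simp [h]
    have hP₀col : ∀ i, P₀ i 0 = v i := by
      intro i
      simp [hP₀, hM₀, Matrix.updateCol_apply, Equiv.swap_apply_left]
    set B : Matrix (Fin (n+1)) (Fin (n+1)) ℂ := P₀⁻¹ * g * P₀ with hB
    have hBcol : ∀ i, i ≠ 0 → B i 0 = 0 := by
      set e0 : Fin (n+1) → ℂ := Pi.single 0 1 with he0
      have hPe : P₀ *ᵥ e0 = v := by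
        rw [he0, Matrix.mulVec_single_one]; funext i; exact hP₀col i
      have key : B *ᵥ e0 = μ • e0 := by
        rw [hB, ← Matrix.mulVec_mulVec, ← Matrix.mulVec_mulVec, hPe, hgv,
          Matrix.mulVec_smul, ← hPe, Matrix.mulVec_mulVec,
          Matrix.nonsing_inv_mul _ hdetP₀, Matrix.one_mulVec]
      intro i hi
      have h2 := congrFun key i
      rw [he0, Matrix.mulVec_single] at h2
      simpa [he0, Pi.single_eq_of_ne hi] using h2
    obtain ⟨Q, hQu, hQt⟩ := ih (B.submatrix Fin.succ Fin.succ)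
    have hQQ' : Q * Q⁻¹ = 1 := Matrix.mul_nonsing_inv _ hQu
    have hQ'Q : Q⁻¹ * Q = 1 := Matrix.nonsing_inv_mul _ hQu
    have hEE' : embM Q * embM Q⁻¹ = 1 := by rw [embM_mul, hQQ', embM_one]
    have hE'E : embM Q⁻¹ * embM Q = 1 := by rw [embM_mul, hQ'Q, embM_one]
    have hEu : IsUnit (embM Q).det := Matrix.isUnit_det_of_right_inverse hEE'
    have hEinv : (embM Q)⁻¹ = embM Q⁻¹ := Matrix.inv_eq_right_inv hEE'
    refine ⟨P₀ * embM Q, by rw [Matrix.det_mul]; exact hdetP₀.mul hEu, ?_⟩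
    have hconj : (P₀ * embM Q)⁻¹ * g * (P₀ * embM Q)
        = embM Q⁻¹ * B * embM Q := by
      rw [Matrix.mul_inv_rev, hEinv, hB]; simp only [Matrix.mul_assoc]
    rw [hconj]
    intro i k hik
    refine Fin.cases ?_ ?_ i hik
    · intro h; exact absurd h (Fin.not_lt_zero k)
    intro i' hk
    refine Fin.cases ?_ ?_ k hk
    · intro _
      rw [Matrix.mul_apply, Fin.sum_univ_succ]
      simp only [embM_zero_zero, embM_succ_zero, mul_zero, mul_one, Finset.sum_const_zero,
        add_zero]
      rw [Matrix.mul_apply, Fin.sum_univ_succ]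
      simp only [embM_succ_zero, zero_mul, zero_add, embM_succ_succ]
      exact Finset.sum_eq_zero fun x _ => by rw [hBcol x.succ (Fin.succ_ne_zero x), mul_zero]
    · intro k' hk'
      have hlt : k' < i' := by
        simpa [Fin.succ_lt_succ_iff] using hk'
      have heq : (embM Q⁻¹ * B * embM Q) i'.succ k'.succ
          = (Q⁻¹ * B.submatrix Fin.succ Fin.succ * Q) i' k' := by
        simp [Matrix.mul_apply, Fin.sum_univ_succ, Finset.mul_sum, Finset.sum_mul]
      rw [heq]
      exact hQt i' k' hlt

private lemma diag_mul {n : ℕ} {M N : Matrix (Fin n) (Fin n) ℂ}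
    (hM : M.BlockTriangular id) (hN : N.BlockTriangular id) (i : Fin n) :
    (M * N) i i = M i i * N i i := by
  rw [Matrix.mul_apply]
  refine Finset.sum_eq_single i (fun j _ hj => ?_) (by simp)
  rcases lt_or_gt_of_ne hj with h | h
  · rw [hM h, zero_mul]
  · rw [hN h, mul_zero]

private lemma pow_tri_diag {n : ℕ} {T : Matrix (Fin n) (Fin n) ℂ}
    (hT : T.BlockTriangular id) (s : ℕ) :
    (T ^ s).BlockTriangular id ∧ ∀ i, (T ^ s) i i = (T i i) ^ s := by
  induction s with
  | zero => simpa using Matrix.blockTriangular_one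
  | succ s ih =>
    rw [pow_succ]
    exact ⟨ih.1.mul hT, fun i => by rw [diag_mul ih.1 hT, ih.2 i, pow_succ]⟩

private lemma eig_data (n : ℕ) (g : Matrix (Fin n) (Fin n) ℂ) :
    ∃ x : Fin n → ℂ, g.det = ∏ i, x i ∧ ∀ s : ℕ, (g ^ s).trace = ∑ i, x i ^ s := by
  obtain ⟨P, hP, hTt⟩ := tri n g
  set T : Matrix (Fin n) (Fin n) ℂ := P⁻¹ * g * P with hT
  have hTtri : T.BlockTriangular id := fun i j h => hTt i j h
  have hg : g = P * T * P⁻¹ := by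
    rw [hT]
    calc g = 1 * g * 1 := by rw [Matrix.one_mul, Matrix.mul_one]
    _ = (P * P⁻¹) * g * (P * P⁻¹) := by rw [Matrix.mul_nonsing_inv _ hP]
    _ = P * (P⁻¹ * g * P) * P⁻¹ := by simp only [Matrix.mul_assoc]
  have hpow : ∀ s : ℕ, g ^ s = P * T ^ s * P⁻¹ := by
    intro s
    induction s with
    | zero => simp [Matrix.mul_nonsing_inv _ hP]
    | succ s ih =>
      rw [pow_succ, ih, hg, pow_succ]
      calc P * T ^ s * P⁻¹ * (P * T * P⁻¹)
          = P * T ^ s * (P⁻¹ * P) * T * P⁻¹ := by simp only [Matrix.mul_assoc]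
        _ = P * (T ^ s * T) * P⁻¹ := by
            rw [Matrix.nonsing_inv_mul _ hP]; simp only [Matrix.mul_assoc, Matrix.mul_one]
  refine ⟨fun i => T i i, ?_, ?_⟩
  · have : T.det = g.det := by
      rw [hT, Matrix.det_mul, Matrix.det_mul, mul_comm, ← mul_assoc, ← Matrix.det_mul,
        Matrix.mul_nonsing_inv _ hP, Matrix.det_one, one_mul]
    rw [← this, Matrix.det_of_upperTriangular hTtri]
  · intro s
    rw [hpow s, Matrix.trace_mul_cycle, Matrix.nonsing_inv_mul _ hP, Matrix.one_mul]
    rw [Matrix.trace]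
    exact Finset.sum_congr rfl fun i _ => by
      rw [Matrix.diag_apply, (pow_tri_diag hTtri s).2 i]

private noncomputable def Pp (n : ℕ) (x : Fin n → ℂ) (t : ℕ) : ℂ := ∑ i, x i ^ t

private noncomputable def Ee (n : ℕ) (x : Fin n → ℂ) (m : ℕ) : ℂ :=
  ∑ A ∈ Finset.powersetCard m Finset.univ, ∏ i ∈ A, x i

private lemma eval_esymm (n : ℕ) (x : Fin n → ℂ) (m : ℕ) :
    MvPolynomial.eval x (MvPolynomial.esymm (Fin n) ℂ m) = Ee n x m := by
  simp [MvPolynomial.esymm, Ee]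

private lemma eval_psum (n : ℕ) (x : Fin n → ℂ) (t : ℕ) :
    MvPolynomial.eval x (MvPolynomial.psum (Fin n) ℂ t) = Pp n x t := by
  simp [MvPolynomial.psum, Pp]

private lemma newton_E (n : ℕ) (x : Fin n → ℂ) (m : ℕ) :
    (m : ℂ) * Ee n x m
      = ∑ k ∈ Finset.range m, (-1 : ℂ) ^ k * Pp n x (k + 1) * Ee n x (m - 1 - k) := by
  have h := congrArg (MvPolynomial.eval x) (MvPolynomial.mul_esymm_eq_sum (Fin n) ℂ m)
  simp only [_root_.map_mul, map_sum, map_pow, _root_.map_neg, _root_.map_one, map_natCast,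
    eval_esymm, eval_psum] at h
  rw [h, Finset.mul_sum]
  refine Finset.sum_nbij' (fun a => a.2 - 1) (fun k => (m - 1 - k, k + 1)) ?_ ?_ ?_ ?_ ?_
  · rintro ⟨a, b⟩ hab
    simp only [Finset.mem_filter, Finset.HasAntidiagonal.mem_antidiagonal] at hab
    simp only [Finset.mem_range]
    omega
  · intro k hk
    simp only [Finset.mem_range] at hk
    simp only [Finset.mem_filter, Finset.HasAntidiagonal.mem_antidiagonal]
    omega
  · rintro ⟨a, b⟩ hab
    simp only [Finset.mem_filter, Finset.HasAntidiagonal.mem_antidiagonal] at hab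
    show (m - 1 - (b - 1), b - 1 + 1) = (a, b)
    simp only [Prod.mk.injEq]
    omega
  · intro k hk
    simp only [Finset.mem_range] at hk
    show k + 1 - 1 = k
    omega
  · rintro ⟨a, b⟩ hab
    simp only [Finset.mem_filter, Finset.HasAntidiagonal.mem_antidiagonal] at hab
    have hb : b - 1 + 1 = b := by omega
    have ha : m - 1 - (b - 1) = a := by omega
    rw [hb, ha]
    have hsgn : (-1 : ℂ) ^ (m + 1) * ((-1) ^ a * Ee n x a * Pp n x b)
        = (-1 : ℂ) ^ (b - 1) * Pp n x b * Ee n x a := by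
      have h2 : (-1 : ℂ) ^ (m + 1) * (-1) ^ a = (-1) ^ (b - 1) := by
        have : m + 1 + a = (b - 1) + 2 * (a + 1) := by omega
        rw [← pow_add, this, pow_add, pow_mul]
        simp
      rw [← mul_assoc, ← mul_assoc, h2]; ring
    rw [hsgn]

private def wt (n : ℕ) (ℓ : Fin n → ℕ) : ℕ := ∑ k : Fin n, (k.1 + 1) * ℓ k

private noncomputable def Sf (n m : ℕ) : Finset (Fin n → ℕ) :=
  (Fintype.piFinset fun _ : Fin n => Finset.range (n + 1)).filter fun ℓ => wt n ℓ = m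

private noncomputable def Pif (n : ℕ) (x : Fin n → ℂ) (ℓ : Fin n → ℕ) : ℂ :=
  ∏ s : Fin n, (1 / ((ℓ s).factorial : ℂ)) *
    ((-1 : ℂ) ^ (s.1 + 1 + 1) / ((s.1 + 1 : ℕ) : ℂ)) ^ (ℓ s) * (Pp n x (s.1 + 1)) ^ (ℓ s)

private noncomputable def Gg (n : ℕ) (x : Fin n → ℂ) (m : ℕ) : ℂ := ∑ ℓ ∈ Sf n m, Pif n x ℓ

private lemma wt_update (n : ℕ) (ℓ : Fin n → ℕ) (k : Fin n) (v : ℕ) :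
    wt n (Function.update ℓ k v) + (k.1 + 1) * ℓ k = wt n ℓ + (k.1 + 1) * v := by
  unfold wt
  rw [← Finset.sum_erase_add _ _ (Finset.mem_univ k),
    ← Finset.sum_erase_add _ (fun j : Fin n => (j.1 + 1) * ℓ j) (Finset.mem_univ k)]
  rw [Finset.sum_congr rfl (fun j hj => by
    rw [Function.update_of_ne (Finset.ne_of_mem_erase hj)])]
  simp [Function.update_self]
  ring

private lemma wt_le (n : ℕ) (ℓ : Fin n → ℕ) (k : Fin n) : (k.1 + 1) * ℓ k ≤ wt n ℓ :=
  Finset.single_le_sum (f := fun j : Fin n => (j.1 + 1) * ℓ j)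
    (fun _ _ => Nat.zero_le _) (Finset.mem_univ k)

private lemma per_k (n : ℕ) (x : Fin n → ℂ) (m : ℕ) (hmn : m ≤ n) (k : Fin n) :
    ∑ ℓ ∈ Sf n m, (((k.1 + 1) * ℓ k : ℕ) : ℂ) * Pif n x ℓ
      = if k.1 + 1 ≤ m then
          (-1 : ℂ) ^ k.1 * Pp n x (k.1 + 1) * Gg n x (m - (k.1 + 1)) else 0 := by
  by_cases hkm : k.1 + 1 ≤ m
  · rw [if_pos hkm]
    -- restrict to ℓ with ℓ k ≠ 0
    rw [← Finset.sum_filter_of_ne (p := fun ℓ => ℓ k ≠ 0)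
      (fun ℓ _ h => by
        intro h0
        apply h
        rw [h0, Nat.mul_zero, Nat.cast_zero, zero_mul])]
    rw [Gg, Finset.mul_sum]
    refine Finset.sum_nbij' (fun ℓ => Function.update ℓ k (ℓ k - 1))
      (fun ℓ => Function.update ℓ k (ℓ k + 1)) ?_ ?_ ?_ ?_ ?_
    · intro ℓ hℓ
      simp only [Finset.mem_filter, Sf, Fintype.mem_piFinset, Finset.mem_range] at hℓ ⊢
      obtain ⟨⟨hpi, hwt⟩, hne⟩ := hℓ
      have hupd := wt_update n ℓ k (ℓ k - 1)
      have hlin : (k.1 + 1) * ℓ k = (k.1 + 1) * (ℓ k - 1) + (k.1 + 1) := by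
        obtain ⟨d, hd⟩ : ∃ d, ℓ k = d + 1 := ⟨ℓ k - 1, by omega⟩
        rw [hd, Nat.add_sub_cancel]; ring
      constructor
      · intro j
        rcases eq_or_ne j k with rfl | hj
        · rw [Function.update_self]; exact lt_of_le_of_lt (Nat.sub_le _ _) (hpi j)
        · rw [Function.update_of_ne hj]; exact hpi j
      · omega
    · intro ℓ hℓ
      simp only [Finset.mem_filter, Sf, Fintype.mem_piFinset, Finset.mem_range] at hℓ ⊢
      obtain ⟨hpi, hwt⟩ := hℓ
      have hupd := wt_update n ℓ k (ℓ k + 1)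
      have hle := wt_le n ℓ k
      have hlin : (k.1 + 1) * (ℓ k + 1) = (k.1 + 1) * ℓ k + (k.1 + 1) := by ring
      have hself : ℓ k ≤ (k.1 + 1) * ℓ k := Nat.le_mul_of_pos_left _ (Nat.succ_pos _)
      have hkn : k.1 + 1 ≤ n := k.isLt
      refine ⟨⟨fun j => ?_, by omega⟩, by simp⟩
      rcases eq_or_ne j k with rfl | hj
      · rw [Function.update_self]
        omega
      · rw [Function.update_of_ne hj]; exact hpi j
    · intro ℓ hℓ
      simp only [Finset.mem_filter, Sf] at hℓ
      have hne : ℓ k ≠ 0 := hℓ.2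
      funext j
      rcases eq_or_ne j k with rfl | hj
      · simp only [Function.update_self]
        omega
      · simp only [Function.update_of_ne hj]
    · intro ℓ hℓ
      funext j
      rcases eq_or_ne j k with rfl | hj
      · simp [Function.update_self]
      · simp [Function.update_of_ne hj]
    · intro ℓ hℓ
      simp only [Finset.mem_filter, Sf] at hℓ
      obtain ⟨-, hne⟩ := hℓ
      obtain ⟨d, hd⟩ : ∃ d, ℓ k = d + 1 := ⟨ℓ k - 1, by omega⟩
      -- split both products at k
      rw [Pif, Pif, ← Finset.mul_prod_erase _ _ (Finset.mem_univ k),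
        ← Finset.mul_prod_erase _ _ (Finset.mem_univ k)]
      have herase : ∀ j ∈ Finset.univ.erase k,
          (1 / (((Function.update ℓ k (ℓ k - 1)) j).factorial : ℂ)) *
            ((-1 : ℂ) ^ (j.1 + 1 + 1) / ((j.1 + 1 : ℕ) : ℂ)) ^ ((Function.update ℓ k (ℓ k - 1)) j) *
            (Pp n x (j.1 + 1)) ^ ((Function.update ℓ k (ℓ k - 1)) j)
          = (1 / ((ℓ j).factorial : ℂ)) *
            ((-1 : ℂ) ^ (j.1 + 1 + 1) / ((j.1 + 1 : ℕ) : ℂ)) ^ (ℓ j) *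
            (Pp n x (j.1 + 1)) ^ (ℓ j) := by
        intro j hj
        rw [Function.update_of_ne (Finset.ne_of_mem_erase hj)]
      rw [Finset.prod_congr rfl herase]
      simp only [Function.update_self, hd, Nat.add_sub_cancel]
      have hsgn : (-1 : ℂ) ^ (k.1 + 1 + 1) = (-1 : ℂ) ^ k.1 := by
        rw [pow_succ, pow_succ]; ring
      have hfd : ((d.factorial : ℕ) : ℂ) ≠ 0 := Nat.cast_ne_zero.mpr (Nat.factorial_ne_zero d)
      have hd1 : ((d : ℂ) + 1) ≠ 0 := Nat.cast_add_one_ne_zero d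
      have hk1 : ((k.1 : ℂ) + 1) ≠ 0 := Nat.cast_add_one_ne_zero k.1
      set p := Pp n x (k.1 + 1) with hp
      set R := ∏ j ∈ Finset.univ.erase k,
        (1 / ((ℓ j).factorial : ℂ)) *
          ((-1 : ℂ) ^ (j.1 + 1 + 1) / ((j.1 + 1 : ℕ) : ℂ)) ^ (ℓ j) *
          (Pp n x (j.1 + 1)) ^ (ℓ j) with hR
      clear_value p R
      clear hp hR herase
      rw [hsgn]
      push_cast [Nat.factorial_succ, pow_succ]
      field_simp
  · rw [if_neg hkm]
    refine Finset.sum_eq_zero fun ℓ hℓ => ?_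
    simp only [Finset.mem_filter, Sf] at hℓ
    have hle := wt_le n ℓ k
    have hwt : wt n ℓ = m := hℓ.2
    rcases Nat.eq_zero_or_pos (ℓ k) with h0 | hpos
    · rw [h0, Nat.mul_zero, Nat.cast_zero, zero_mul]
    · exfalso
      have h1 : (k.1 + 1) * 1 ≤ (k.1 + 1) * ℓ k := Nat.mul_le_mul_left _ hpos
      omega

private lemma newton_G (n : ℕ) (x : Fin n → ℂ) (m : ℕ) (hmn : m ≤ n) :
    (m : ℂ) * Gg n x m
      = ∑ k ∈ Finset.range m, (-1 : ℂ) ^ k * Pp n x (k + 1) * Gg n x (m - 1 - k) := by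
  have h1 : (m : ℂ) * Gg n x m
      = ∑ ℓ ∈ Sf n m, ∑ k : Fin n, (((k.1 + 1) * ℓ k : ℕ) : ℂ) * Pif n x ℓ := by
    rw [Gg, Finset.mul_sum]
    refine Finset.sum_congr rfl fun ℓ hℓ => ?_
    simp only [Finset.mem_filter, Sf] at hℓ
    rw [← Finset.sum_mul]
    congr 1
    rw [← hℓ.2, wt]
    push_cast
    rfl
  rw [h1, Finset.sum_comm]
  have h2 : ∀ k : Fin n, ∑ ℓ ∈ Sf n m, (((k.1 + 1) * ℓ k : ℕ) : ℂ) * Pif n x ℓ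
      = if k.1 + 1 ≤ m then
          (-1 : ℂ) ^ k.1 * Pp n x (k.1 + 1) * Gg n x (m - (k.1 + 1)) else 0 :=
    per_k n x m hmn
  rw [Finset.sum_congr rfl fun k _ => h2 k]
  rw [Fin.sum_univ_eq_sum_range (fun j => if j + 1 ≤ m then
    (-1 : ℂ) ^ j * Pp n x (j + 1) * Gg n x (m - (j + 1)) else 0)]
  rw [← Finset.sum_subset (Finset.range_subset_range.mpr hmn)
    (fun j _ hj => by
      rw [if_neg]
      simp only [Finset.mem_range, not_lt] at hj
      omega)]
  refine Finset.sum_congr rfl fun j hj => ?_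
  simp only [Finset.mem_range] at hj
  rw [if_pos (by omega)]
  congr 2
  omega

private lemma Ee_zero (n : ℕ) (x : Fin n → ℂ) : Ee n x 0 = 1 := by
  simp [Ee]

private lemma Sf_zero (n : ℕ) : Sf n 0 = {fun _ => 0} := by
  ext ℓ
  simp only [Sf, Finset.mem_filter, Fintype.mem_piFinset, Finset.mem_range,
    Finset.mem_singleton]
  constructor
  · rintro ⟨-, hwt⟩
    funext k
    have := (Finset.sum_eq_zero_iff (s := Finset.univ)
      (f := fun k : Fin n => (k.1 + 1) * ℓ k)).mp hwt k (Finset.mem_univ k)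
    rcases Nat.mul_eq_zero.mp this with h | h
    · omega
    · exact h
  · rintro rfl
    exact ⟨fun _ => Nat.succ_pos n, by simp [wt]⟩

private lemma Gg_zero (n : ℕ) (x : Fin n → ℂ) : Gg n x 0 = 1 := by
  rw [Gg, Sf_zero, Finset.sum_singleton]
  simp [Pif]

private lemma E_eq_G (n : ℕ) (x : Fin n → ℂ) : ∀ m, m ≤ n → Ee n x m = Gg n x m := by
  intro m
  induction m using Nat.strong_induction_on with
  | _ m ih =>
    intro hmn
    rcases Nat.eq_zero_or_pos m with rfl | hpos
    · rw [Ee_zero, Gg_zero]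
    · have hE := newton_E n x m
      have hG := newton_G n x m hmn
      have hsum : ∑ k ∈ Finset.range m, (-1 : ℂ) ^ k * Pp n x (k + 1) * Ee n x (m - 1 - k)
          = ∑ k ∈ Finset.range m, (-1 : ℂ) ^ k * Pp n x (k + 1) * Gg n x (m - 1 - k) := by
        refine Finset.sum_congr rfl fun k hk => ?_
        simp only [Finset.mem_range] at hk
        rw [ih (m - 1 - k) (by omega) (by omega)]
      have : (m : ℂ) * Ee n x m = (m : ℂ) * Gg n x m := by rw [hE, hG, hsum]
      exact mul_left_cancel₀ (Nat.cast_ne_zero.mpr (by omega)) this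

/-- Cycle expansion of the determinant in terms of traces of powers. -/
theorem cycle_expansion_det (n : ℕ) (g : Matrix (Fin n) (Fin n) ℂ) :
    g.det =
      ∑ ℓ ∈ Finset.univ.filter
          (fun ℓ : Fin n → Fin (n + 1) => ∑ k : Fin n, (k.1 + 1) * (ℓ k).1 = n),
        ∏ s : Fin n,
          (1 / ((ℓ s).1.factorial : ℂ)) *
            ((-1 : ℂ) ^ (s.1 + 1 + 1) / ((s.1 + 1 : ℕ) : ℂ)) ^ (ℓ s).1 *
              ((g ^ (s.1 + 1)).trace) ^ (ℓ s).1 := by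
  obtain ⟨x, hdet, htr⟩ := eig_data n g
  have hEn : Ee n x n = ∏ i, x i := by
    have hc : (Finset.univ : Finset (Fin n)).card = n := by simp
    have h := Finset.powersetCard_self (Finset.univ : Finset (Fin n))
    rw [hc] at h
    rw [Ee, h, Finset.sum_singleton]
  rw [hdet, ← hEn, E_eq_G n x n le_rfl, Gg]
  refine (Finset.sum_nbij' (fun ℓ (k : Fin n) => (ℓ k : ℕ))
    (fun (ℓ : Fin n → ℕ) (k : Fin n) => (⟨ℓ k % (n + 1), Nat.mod_lt _ (Nat.succ_pos n)⟩ : Fin (n+1)))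
    ?_ ?_ ?_ ?_ ?_).symm
  · intro ℓ hℓ
    simp only [Finset.mem_filter, Finset.mem_univ, true_and] at hℓ
    simp only [Sf, Finset.mem_filter, Fintype.mem_piFinset, Finset.mem_range]
    exact ⟨fun k => (ℓ k).isLt, hℓ⟩
  · intro ℓ hℓ
    simp only [Sf, Finset.mem_filter, Fintype.mem_piFinset, Finset.mem_range] at hℓ
    simp only [Finset.mem_filter, Finset.mem_univ, true_and]
    have heq : ∑ k : Fin n, (k.1 + 1) * (ℓ k % (n + 1)) = wt n ℓ :=
      Finset.sum_congr rfl fun k _ => by rw [Nat.mod_eq_of_lt (hℓ.1 k)]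
    exact heq.trans hℓ.2
  · intro ℓ hℓ
    funext k
    exact Fin.ext (Nat.mod_eq_of_lt (ℓ k).isLt)
  · intro ℓ hℓ
    simp only [Sf, Finset.mem_filter, Fintype.mem_piFinset, Finset.mem_range] at hℓ
    funext k
    exact Nat.mod_eq_of_lt (hℓ.1 k)
  · intro ℓ hℓ
    rw [Pif]
    exact Finset.prod_congr rfl fun s _ => by simp only [htr (s.1 + 1), Pp]
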